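/- Let U ⊆ ℂ be open, let φ₁, φ₃ : U → ℂ be holomorphic with primitives h₁, h₃, and define x(u+iv) = (Re h₁, −Im h₁, Re h₃). At every z₀ ∈ U with φ₁(z₀) ≠ 0, the isotropic Gaussian curvature K = (h₁₁h₂₂ − h₁₂²)/(g₁₁g₂₂ − g₁₂²) satisfies K(z₀) = −|(φ₃/φ₁)'(z₀)|² / |φ₁(z₀)|². In particular K ≤ 0 everywhere. -/

import Mathlib

noncomputable section

/-- Partial derivative of a map on ℂ ≅ ℝ² in the u-direction (real direction 1). -/
def du {E : Type*} [NormedAddCommGroup E] [NormedSpace ℝ E]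
    (f : ℂ → E) : ℂ → E := fun z => fderiv ℝ f z 1

/-- Partial derivative of a map on ℂ ≅ ℝ² in the v-direction (direction i). -/
def dv {E : Type*} [NormedAddCommGroup E] [NormedSpace ℝ E]
    (f : ℂ → E) : ℂ → E := fun z => fderiv ℝ f z Complex.I

/-- The degenerate simply isotropic inner product on ℝ³: ⟨u,v⟩ = u₁v₁ + u₂v₂. -/
def isoInner (a b : ℝ × ℝ × ℝ) : ℝ := a.1 * b.1 + a.2.1 * b.2.1

/-- The Euclidean dot product on ℝ³. -/
def dot3 (a b : ℝ × ℝ × ℝ) : ℝ := a.1 * b.1 + a.2.1 * b.2.1 + a.2.2 * b.2.2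

/-- The Euclidean cross product on ℝ³. -/
def cross3 (a b : ℝ × ℝ × ℝ) : ℝ × ℝ × ℝ :=
  (a.2.1 * b.2.2 - a.2.2 * b.2.1, a.2.2 * b.1 - a.1 * b.2.2, a.1 * b.2.1 - a.2.1 * b.1)

/-- First fundamental form coefficients (isotropic metric) of x : ℂ → ℝ³. -/
def g11 (x : ℂ → ℝ × ℝ × ℝ) (z : ℂ) : ℝ := isoInner (du x z) (du x z)
def g12 (x : ℂ → ℝ × ℝ × ℝ) (z : ℂ) : ℝ := isoInner (du x z) (dv x z)
def g22 (x : ℂ → ℝ × ℝ × ℝ) (z : ℂ) : ℝ := isoInner (dv x z) (dv x z)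

/-- The minimal normal: the unique vector of the form (n₁,n₂,1) Euclidean-orthogonal to
x_u and x_v (obtained by normalizing the cross product so its third component is 1). -/
def Nm (x : ℂ → ℝ × ℝ × ℝ) (z : ℂ) : ℝ × ℝ × ℝ :=
  ((cross3 (du x z) (dv x z)).1 / (cross3 (du x z) (dv x z)).2.2,
   (cross3 (du x z) (dv x z)).2.1 / (cross3 (du x z) (dv x z)).2.2, 1)

/-- Second fundamental form coefficients with respect to the minimal normal. -/
def h11 (x : ℂ → ℝ × ℝ × ℝ) (z : ℂ) : ℝ := dot3 (du (du x) z) (Nm x z)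
def h12 (x : ℂ → ℝ × ℝ × ℝ) (z : ℂ) : ℝ := dot3 (du (dv x) z) (Nm x z)
def h22 (x : ℂ → ℝ × ℝ × ℝ) (z : ℂ) : ℝ := dot3 (dv (dv x) z) (Nm x z)

/-- The isotropic Gaussian curvature. -/
def Kcurv (x : ℂ → ℝ × ℝ × ℝ) (z : ℂ) : ℝ :=
  (h11 x z * h22 x z - (h12 x z) ^ 2) / (g11 x z * g22 x z - (g12 x z) ^ 2)

/-- The isotropic mean curvature. -/
def meanH (x : ℂ → ℝ × ℝ × ℝ) (z : ℂ) : ℝ :=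
  (g11 x z * h22 x z - 2 * g12 x z * h12 x z + g22 x z * h11 x z) /
    (2 * (g11 x z * g22 x z - (g12 x z) ^ 2))

lemma keyHFD (A B C : ℂ →L[ℝ] ℝ) {f₁ f₃ : ℂ → ℂ} {c₁ c₃ : ℂ} {z : ℂ}
    (H₁ : HasDerivAt f₁ c₁ z) (H₃ : HasDerivAt f₃ c₃ z) :
    HasFDerivAt (fun w => (A (f₁ w), B (f₁ w), C (f₃ w)))
      (((A.comp ((ContinuousLinearMap.smulRight (1 : ℂ →L[ℂ] ℂ) c₁).restrictScalars ℝ)).prod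
        ((B.comp ((ContinuousLinearMap.smulRight (1 : ℂ →L[ℂ] ℂ) c₁).restrictScalars ℝ)).prod
         (C.comp ((ContinuousLinearMap.smulRight (1 : ℂ →L[ℂ] ℂ) c₃).restrictScalars ℝ))))) z :=
  (A.hasFDerivAt.comp z (H₁.hasFDerivAt.restrictScalars ℝ)).prodMk
    ((B.hasFDerivAt.comp z (H₁.hasFDerivAt.restrictScalars ℝ)).prodMk
     (C.hasFDerivAt.comp z (H₃.hasFDerivAt.restrictScalars ℝ)))

lemma key (A B C : ℂ →L[ℝ] ℝ) {f₁ f₃ : ℂ → ℂ} {c₁ c₃ : ℂ} {z : ℂ}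
    (H₁ : HasDerivAt f₁ c₁ z) (H₃ : HasDerivAt f₃ c₃ z) :
    du (fun w => (A (f₁ w), B (f₁ w), C (f₃ w))) z = (A c₁, B c₁, C c₃) ∧
    dv (fun w => (A (f₁ w), B (f₁ w), C (f₃ w))) z
      = (A (Complex.I * c₁), B (Complex.I * c₁), C (Complex.I * c₃)) := by
  have h := (keyHFD A B C H₁ H₃).fderiv
  constructor
  · show fderiv ℝ _ z 1 = _
    rw [h]; simp
  · show fderiv ℝ _ z Complex.I = _
    rw [h]; simp

lemma keyA {f₁ f₃ : ℂ → ℂ} {c₁ c₃ : ℂ} {z : ℂ}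
    (H₁ : HasDerivAt f₁ c₁ z) (H₃ : HasDerivAt f₃ c₃ z) :
    du (fun w => ((f₁ w).re, -(f₁ w).im, (f₃ w).re)) z = (c₁.re, -c₁.im, c₃.re) ∧
    dv (fun w => ((f₁ w).re, -(f₁ w).im, (f₃ w).re)) z = (-c₁.im, -c₁.re, -c₃.im) := by
  have h := key Complex.reCLM (-Complex.imCLM) Complex.reCLM H₁ H₃
  simpa [Complex.I_mul_re, Complex.I_mul_im] using h

lemma keyB {f₁ f₃ : ℂ → ℂ} {c₁ c₃ : ℂ} {z : ℂ}
    (H₁ : HasDerivAt f₁ c₁ z) (H₃ : HasDerivAt f₃ c₃ z) :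
    du (fun w => (-(f₁ w).im, -(f₁ w).re, -(f₃ w).im)) z = (-c₁.im, -c₁.re, -c₃.im) ∧
    dv (fun w => (-(f₁ w).im, -(f₁ w).re, -(f₃ w).im)) z = (-c₁.re, c₁.im, -c₃.re) := by
  have h := key (-Complex.imCLM) (-Complex.reCLM) (-Complex.imCLM) H₁ H₃
  simpa [Complex.I_mul_re, Complex.I_mul_im] using h

set_option maxHeartbeats 2000000 in
set_option linter.unreachableTactic false in
set_option linter.unusedTactic false in
theorem stmt11 (U : Set ℂ) (hU : IsOpen U) (φ₁ φ₃ h₁ h₃ : ℂ → ℂ)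
    (hφ₁ : DifferentiableOn ℂ φ₁ U) (hφ₃ : DifferentiableOn ℂ φ₃ U)
    (hh₁ : ∀ z ∈ U, HasDerivAt h₁ (φ₁ z) z)
    (hh₃ : ∀ z ∈ U, HasDerivAt h₃ (φ₃ z) z) :
    (∀ z₀ ∈ U, φ₁ z₀ ≠ 0 →
      Kcurv (fun w => ((h₁ w).re, -(h₁ w).im, (h₃ w).re)) z₀ =
        -(‖deriv (fun z => φ₃ z / φ₁ z) z₀‖ ^ 2) / ‖φ₁ z₀‖ ^ 2) ∧
    (∀ z₀ ∈ U, Kcurv (fun w => ((h₁ w).re, -(h₁ w).im, (h₃ w).re)) z₀ ≤ 0) := by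
  set x : ℂ → ℝ × ℝ × ℝ := fun w => ((h₁ w).re, -(h₁ w).im, (h₃ w).re) with hxdef
  have main : ∀ z₀ ∈ U, φ₁ z₀ ≠ 0 →
      Kcurv x z₀ =
        -(‖deriv (fun z => φ₃ z / φ₁ z) z₀‖ ^ 2) / ‖φ₁ z₀‖ ^ 2 := by
    intro z₀ hz₀ hne
    have hUz : U ∈ nhds z₀ := hU.mem_nhds hz₀
    have d1 : DifferentiableAt ℂ φ₁ z₀ := hφ₁.differentiableAt hUz
    have d3 : DifferentiableAt ℂ φ₃ z₀ := hφ₃.differentiableAt hUz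
    have H1 : HasDerivAt φ₁ (deriv φ₁ z₀) z₀ := d1.hasDerivAt
    have H3 : HasDerivAt φ₃ (deriv φ₃ z₀) z₀ := d3.hasDerivAt
    have hdux : du x =ᶠ[nhds z₀] fun w => ((φ₁ w).re, -(φ₁ w).im, (φ₃ w).re) := by
      filter_upwards [hUz] with w hw
      exact (keyA (hh₁ w hw) (hh₃ w hw)).1
    have hdvx : dv x =ᶠ[nhds z₀] fun w => (-(φ₁ w).im, -(φ₁ w).re, -(φ₃ w).im) := by
      filter_upwards [hUz] with w hw
      exact (keyA (hh₁ w hw) (hh₃ w hw)).2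
    have e1 : du x z₀ = ((φ₁ z₀).re, -(φ₁ z₀).im, (φ₃ z₀).re) :=
      (keyA (hh₁ z₀ hz₀) (hh₃ z₀ hz₀)).1
    have e2 : dv x z₀ = (-(φ₁ z₀).im, -(φ₁ z₀).re, -(φ₃ z₀).im) :=
      (keyA (hh₁ z₀ hz₀) (hh₃ z₀ hz₀)).2
    have e11 : du (du x) z₀ = ((deriv φ₁ z₀).re, -(deriv φ₁ z₀).im, (deriv φ₃ z₀).re) := by
      show fderiv ℝ (du x) z₀ 1 = _
      rw [hdux.fderiv_eq]
      exact (keyA H1 H3).1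
    have e12 : du (dv x) z₀ = (-(deriv φ₁ z₀).im, -(deriv φ₁ z₀).re, -(deriv φ₃ z₀).im) := by
      show fderiv ℝ (dv x) z₀ 1 = _
      rw [hdvx.fderiv_eq]
      exact (keyB H1 H3).1
    have e22 : dv (dv x) z₀ = (-(deriv φ₁ z₀).re, (deriv φ₁ z₀).im, -(deriv φ₃ z₀).re) := by
      show fderiv ℝ (dv x) z₀ Complex.I = _
      rw [hdvx.fderiv_eq]
      exact (keyB H1 H3).2
    have hD : deriv (fun z => φ₃ z / φ₁ z) z₀ =
        (deriv φ₃ z₀ * φ₁ z₀ - φ₃ z₀ * deriv φ₁ z₀) / (φ₁ z₀) ^ 2 := (H3.div H1 hne).deriv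
    have hab : (φ₁ z₀).re ^ 2 + (φ₁ z₀).im ^ 2 ≠ 0 := by
      have h := (Complex.normSq_pos.mpr hne).ne'
      rwa [Complex.normSq_apply, ← pow_two, ← pow_two] at h
    set a := (φ₁ z₀).re with ha
    set b := (φ₁ z₀).im with hb
    set p := (φ₃ z₀).re with hp
    set q := (φ₃ z₀).im with hq
    have Ecr : cross3 (du x z₀) (dv x z₀) = (p * a + q * b, q * a - p * b, -(a ^ 2 + b ^ 2)) := by
      rw [cross3, e1, e2]
      exact Prod.ext (by ring) (Prod.ext (by ring) (by ring))
    have EN : Nm x z₀ = (-((p * a + q * b) / (a ^ 2 + b ^ 2)),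
        -((q * a - p * b) / (a ^ 2 + b ^ 2)), 1) := by
      rw [Nm, Ecr]
      exact Prod.ext (div_neg _) (Prod.ext (div_neg _) rfl)
    set s := a ^ 2 + b ^ 2 with hs
    have Eg11 : g11 x z₀ = s := by rw [g11, isoInner, e1]; ring
    have Eg12 : g12 x z₀ = 0 := by rw [g12, isoInner, e1, e2]; ring
    have Eg22 : g22 x z₀ = s := by rw [g22, isoInner, e2]; ring
    have Eh11 : h11 x z₀ = ((deriv φ₁ z₀).re * -(p * a + q * b)
        + -(deriv φ₁ z₀).im * -(q * a - p * b) + (deriv φ₃ z₀).re * s) / s := by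
      rw [h11, dot3, e11, EN]
      field_simp
      all_goals ring
    have Eh12 : h12 x z₀ = (-(deriv φ₁ z₀).im * -(p * a + q * b)
        + -(deriv φ₁ z₀).re * -(q * a - p * b) + -(deriv φ₃ z₀).im * s) / s := by
      rw [h12, dot3, e12, EN]
      field_simp
      all_goals ring
    have Eh22 : h22 x z₀ = (-(deriv φ₁ z₀).re * -(p * a + q * b)
        + (deriv φ₁ z₀).im * -(q * a - p * b) + -(deriv φ₃ z₀).re * s) / s := by
      rw [h22, dot3, e22, EN]
      field_simp
      all_goals ring
    rw [Kcurv, Eg11, Eg12, Eg22, Eh11, Eh12, Eh22, hD]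
    rw [Complex.sq_norm, Complex.sq_norm, map_div₀ Complex.normSq, map_pow]
    simp only [Complex.normSq_apply, Complex.sub_re, Complex.sub_im, Complex.mul_re,
      Complex.mul_im, ← ha, ← hb, ← hp, ← hq]
    have hab' : a ^ 2 + b ^ 2 ≠ 0 := by rw [hs] at hab; exact hab
    have hab2 : a * a + b * b ≠ 0 := by rw [← pow_two a, ← pow_two b]; exact hab'
    rw [hs] at *
    field_simp [hab', hab2]
    ring
  refine ⟨main, ?_⟩
  intro z₀ hz₀
  by_cases hne : φ₁ z₀ = 0
  · have e1 : du x z₀ = ((φ₁ z₀).re, -(φ₁ z₀).im, (φ₃ z₀).re) :=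
      (keyA (hh₁ z₀ hz₀) (hh₃ z₀ hz₀)).1
    have e2 : dv x z₀ = (-(φ₁ z₀).im, -(φ₁ z₀).re, -(φ₃ z₀).im) :=
      (keyA (hh₁ z₀ hz₀) (hh₃ z₀ hz₀)).2
    simp [Kcurv, g11, g12, g22, isoInner, e1, e2, hne]
  · rw [main z₀ hz₀ hne]
    apply div_nonpos_of_nonpos_of_nonneg
    · simp [sq_nonneg]
    · positivity
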